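/- arXiv:1512.04084 — 5 statements merged into one kernel-verified Lean document; each statement's English description precedes it below -/
import Mathlib

section
/- Let X be an ℕ-valued random variable that is TN_2. Then for all partitions λ and μ, if λ dominates μ then condition C(λ,μ,X) holds. -/
open Finset

noncomputable section

/-- The ℕ×ℕ Toeplitz matrix of a sequence `p`, with `(T_p)_{i,j} = p_{j-i}`
(and `0` when `j < i`, i.e. `p_n = 0` for negative `n`). -/
def toeplitz (p : ℕ → ℝ) : Matrix ℕ ℕ ℝ :=
  fun i j => if i ≤ j then p (j - i) else 0

/-- A matrix is totally non-negative of order `k` iff every minor of size at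
most `k` (rows and columns chosen strictly increasingly) is non-negative. -/
def IsTN (k : ℕ) (M : Matrix ℕ ℕ ℝ) : Prop :=
  ∀ l : ℕ, l ≤ k → ∀ r c : Fin l → ℕ, StrictMono r → StrictMono c →
    0 ≤ (M.submatrix r c).det

/-- A matrix is totally positive of order `k` iff every minor of size at
most `k` is positive. -/
def IsTP (k : ℕ) (M : Matrix ℕ ℕ ℝ) : Prop :=
  ∀ l : ℕ, l ≤ k → ∀ r c : Fin l → ℕ, StrictMono r → StrictMono c →
    0 < (M.submatrix r c).det

/-- The matrix `S_p` with `(S_p)_{i,j} = (p^i)_j`, the coefficient of `x^j` in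
`p(x)^i` where `p(x) = Σ p_n x^n` (and `p(x)^0 = 1`). -/
def sMatrix (p : ℕ → ℝ) : Matrix ℕ ℕ ℝ :=
  fun i j => PowerSeries.coeff j (PowerSeries.mk p ^ i)

/-- A partition: a non-increasing function from the positive integers to ℕ with
finite support (we set the irrelevant value at `0` to be `0`). -/
structure PartitionSeq where
  part : ℕ → ℕ
  zero : part 0 = 0
  antitone : ∀ ⦃i j : ℕ⦄, 1 ≤ i → i ≤ j → part j ≤ part i
  finSupp : (Function.support part).Finite

/-- The weight `|λ|` of a partition. -/
def PartitionSeq.weight (lam : PartitionSeq) : ℕ := ∑ᶠ i, lam.part i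

/-- `λ` dominates `μ`: equal weights and partial sums of `λ` are at least
those of `μ`. -/
def PartitionSeq.Dominates (lam mu : PartitionSeq) : Prop :=
  lam.weight = mu.weight ∧
  ∀ j : ℕ, 1 ≤ j →
    ∑ i ∈ Finset.Icc 1 j, mu.part i ≤ ∑ i ∈ Finset.Icc 1 j, lam.part i

/-- `f(λ, p(x), t, x) = ∏_i (p(x)^{λ(i)} |_t)`, the product over rows of the
truncations to degree `t` of powers of the generating function. -/
def fPoly (lam : PartitionSeq) (p : ℕ → ℝ) (t : ℕ) : Polynomial ℝ :=
  ∏ᶠ i : ℕ, PowerSeries.trunc (t + 1) (PowerSeries.mk p ^ lam.part i)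

/-- `P(E(λ,X,j,t))` for `X` with probability mass function `p`: the coefficient
of `x^j` in `∏_i ((p_X(x))^{λ(i)} |_t)`. -/
def probE (p : ℕ → ℝ) (lam : PartitionSeq) (j t : ℕ) : ℝ :=
  (fPoly lam p t).coeff j

/-- Condition `C(λ,μ,X)`: `P(E(λ,X,j,t)) ≤ P(E(μ,X,j,t))` for all `j, t ∈ ℕ`. -/
def CondC (p : ℕ → ℝ) (lam mu : PartitionSeq) : Prop :=
  ∀ j t : ℕ, probE p lam j t ≤ probE p mu j t

namespace CondCAux

lemma strictMono_pair {a b : ℕ} (h : a < b) : StrictMono ![a, b] := by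
  intro i j hij
  fin_cases i <;> fin_cases j <;> simp_all

lemma toeplitz_nonneg {p : ℕ → ℝ} (hnn : ∀ n, 0 ≤ p n) (i j : ℕ) :
    0 ≤ toeplitz p i j := by
  unfold toeplitz; split
  · exact hnn _
  · exact le_refl _

lemma tn2 {p : ℕ → ℝ} (hTN : IsTN 2 (toeplitz p)) {k l v u : ℕ}
    (hkl : k ≤ l) (hvu : v ≤ u) :
    toeplitz p l v * toeplitz p k u ≤ toeplitz p k v * toeplitz p l u := by
  rcases eq_or_lt_of_le hkl with rfl | hkl
  · exact le_rfl
  rcases eq_or_lt_of_le hvu with rfl | hvu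
  · exact le_of_eq (mul_comm _ _)
  have := hTN 2 le_rfl ![k, l] ![v, u] (strictMono_pair hkl) (strictMono_pair hvu)
  rw [Matrix.det_fin_two] at this
  simp only [Matrix.submatrix_apply, Matrix.cons_val_zero, Matrix.cons_val_one,
    Matrix.head_cons] at this
  linarith

lemma coeff_mk_pow_nonneg {p : ℕ → ℝ} (hnn : ∀ n, 0 ≤ p n) (c n : ℕ) :
    0 ≤ PowerSeries.coeff n (PowerSeries.mk p ^ c) := by
  induction c generalizing n with
  | zero =>
      rw [pow_zero, PowerSeries.coeff_one]
      split <;> norm_num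
  | succ c ih =>
      rw [pow_succ, PowerSeries.coeff_mul]
      exact Finset.sum_nonneg fun x _ =>
        mul_nonneg (ih x.1) (by simpa using hnn x.2)

/-- ratio increasing relation -/
def LR (F G : PowerSeries ℝ) : Prop :=
  ∀ ⦃v u : ℕ⦄, v ≤ u →
    PowerSeries.coeff v F * PowerSeries.coeff u G ≤
      PowerSeries.coeff u F * PowerSeries.coeff v G

lemma coeff_mul_mk {p : ℕ → ℝ} (F : PowerSeries ℝ) (u N : ℕ) (h : u < N) :
    PowerSeries.coeff u (F * PowerSeries.mk p) =
      ∑ l ∈ range N, PowerSeries.coeff l F * toeplitz p l u := by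
  rw [PowerSeries.coeff_mul, Finset.Nat.sum_antidiagonal_eq_sum_range_succ_mk]
  rw [← Finset.sum_subset (Finset.range_subset_range.2 h)]
  · exact Finset.sum_congr rfl fun l hl => by
      rw [Finset.mem_range, Nat.lt_succ_iff] at hl
      simp [toeplitz, hl, PowerSeries.coeff_mk]
  · intro l _ hl
    rw [Finset.mem_range, Nat.lt_succ_iff, not_le] at hl
    have : toeplitz p l u = 0 := by simp [toeplitz, Nat.not_le.2 hl]
    rw [this, mul_zero]

lemma sym_sum_le (s : Finset ℕ) (f g : ℕ → ℕ → ℝ)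
    (h : ∀ l ∈ s, ∀ k ∈ s, f l k + f k l ≤ g l k + g k l) :
    ∑ l ∈ s, ∑ k ∈ s, f l k ≤ ∑ l ∈ s, ∑ k ∈ s, g l k := by
  have hf : ∑ l ∈ s, ∑ k ∈ s, f k l = ∑ l ∈ s, ∑ k ∈ s, f l k := Finset.sum_comm
  have hg : ∑ l ∈ s, ∑ k ∈ s, g k l = ∑ l ∈ s, ∑ k ∈ s, g l k := Finset.sum_comm
  have key : ∑ l ∈ s, ∑ k ∈ s, (f l k + f k l) ≤ ∑ l ∈ s, ∑ k ∈ s, (g l k + g k l) :=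
    Finset.sum_le_sum fun l hl => Finset.sum_le_sum fun k hk => h l hl k hk
  simp only [Finset.sum_add_distrib] at key
  linarith

lemma LR.mul_mk {p : ℕ → ℝ} (hnn : ∀ n, 0 ≤ p n) (hTN : IsTN 2 (toeplitz p))
    {F G : PowerSeries ℝ} (hF : ∀ n, 0 ≤ PowerSeries.coeff n F)
    (hG : ∀ n, 0 ≤ PowerSeries.coeff n G) (h : LR F G) :
    LR (F * PowerSeries.mk p) (G * PowerSeries.mk p) := by
  intro v u hvu
  rw [coeff_mul_mk F u (u+1) (by omega), coeff_mul_mk F v (u+1) (by omega),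
    coeff_mul_mk G u (u+1) (by omega), coeff_mul_mk G v (u+1) (by omega)]
  rw [Finset.sum_mul_sum, Finset.sum_mul_sum]
  apply sym_sum_le
  intro l _ k _
  -- key pointwise inequality, symmetric in (l,k); WLOG k ≤ l
  have main : ∀ l k : ℕ, k ≤ l →
      PowerSeries.coeff l F * toeplitz p l v * (PowerSeries.coeff k G * toeplitz p k u)
        + PowerSeries.coeff k F * toeplitz p k v * (PowerSeries.coeff l G * toeplitz p l u)
      ≤ PowerSeries.coeff l F * toeplitz p l u * (PowerSeries.coeff k G * toeplitz p k v)
        + PowerSeries.coeff k F * toeplitz p k u * (PowerSeries.coeff l G * toeplitz p l v) := by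
    intro l k hkl
    have hX : PowerSeries.coeff k F * PowerSeries.coeff l G ≤
        PowerSeries.coeff l F * PowerSeries.coeff k G := h hkl
    have hY : 0 ≤ PowerSeries.coeff k F * PowerSeries.coeff l G :=
      mul_nonneg (hF k) (hG l)
    have hA : toeplitz p l v * toeplitz p k u ≤ toeplitz p k v * toeplitz p l u :=
      tn2 hTN hkl hvu
    have hB : 0 ≤ toeplitz p l v * toeplitz p k u :=
      mul_nonneg (toeplitz_nonneg hnn _ _) (toeplitz_nonneg hnn _ _)
    nlinarith [mul_nonneg (sub_nonneg.2 hX) (sub_nonneg.2 hA)]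
  rcases le_total k l with hkl | hkl
  · exact main l k hkl
  · linarith [main k l hkl]

lemma lr_pow {p : ℕ → ℝ} (hnn : ∀ n, 0 ≤ p n) (hTN : IsTN 2 (toeplitz p))
    (b d : ℕ) : LR (PowerSeries.mk p ^ (b + d)) (PowerSeries.mk p ^ b) := by
  induction b with
  | zero =>
      intro v u hvu
      rw [pow_zero, PowerSeries.coeff_one, PowerSeries.coeff_one]
      rcases Nat.eq_zero_or_pos u with rfl | hu
      · interval_cases v; simp
      · rw [if_neg (by omega)]
        rcases Nat.eq_zero_or_pos v with rfl | hv
        · simpa using coeff_mk_pow_nonneg hnn d u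
        · rw [if_neg (by omega)]; simp
  | succ b ih =>
      have := LR.mul_mk hnn hTN (coeff_mk_pow_nonneg hnn (b + d))
        (coeff_mk_pow_nonneg hnn b) ih
      rw [← pow_succ, ← pow_succ] at this
      have e : b + d + 1 = b + 1 + d := by omega
      rwa [e] at this

lemma coeff_mul_trunc_expand (A B : PowerSeries ℝ) (j t N : ℕ) (hj : j < N) :
    (PowerSeries.trunc (t+1) A * PowerSeries.trunc (t+1) B).coeff j
      = ∑ u ∈ range N, ∑ v ∈ range N, if u + v = j then
          ((if u ≤ t then PowerSeries.coeff u A else 0) *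
           (if v ≤ t then PowerSeries.coeff v B else 0)) else 0 := by
  rw [Polynomial.coeff_mul]
  have hset : Finset.HasAntidiagonal.antidiagonal j
      = (range N ×ˢ range N).filter (fun x => x.1 + x.2 = j) := by
    ext ⟨a, b⟩
    simp only [Finset.HasAntidiagonal.mem_antidiagonal, Finset.mem_filter, Finset.mem_product,
      Finset.mem_range]
    omega
  rw [hset, Finset.sum_filter, Finset.sum_product]
  refine Finset.sum_congr rfl fun u _ => Finset.sum_congr rfl fun v _ => ?_
  rw [PowerSeries.coeff_trunc, PowerSeries.coeff_trunc]
  simp only [Nat.lt_succ_iff]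

lemma reindex (p : ℕ → ℝ) (w a j N : ℕ) (hj : j < N) (c : ℕ → ℝ) :
    ∑ x ∈ range N, (if x + a = j then toeplitz p w x * c x else 0)
      = ∑ k ∈ range N, (if w + k + a = j then p k * c (w + k) else 0) := by
  by_cases ha : a ≤ j
  · have h1 : ∀ x : ℕ, (if x + a = j then toeplitz p w x * c x else 0)
        = (if x = j - a then toeplitz p w x * c x else 0) := fun x =>
      if_congr (by omega) rfl rfl
    simp only [h1]
    rw [Finset.sum_ite_eq' (range N) (j - a)]
    rw [if_pos (Finset.mem_range.2 (by omega))]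
    by_cases hw : w ≤ j - a
    · have h2 : ∀ k : ℕ, (if w + k + a = j then p k * c (w + k) else 0)
          = (if k = j - a - w then p k * c (w + k) else 0) := fun k =>
        if_congr (by omega) rfl rfl
      simp only [h2]
      rw [Finset.sum_ite_eq' (range N) (j - a - w)]
      rw [if_pos (Finset.mem_range.2 (by omega))]
      have hT : toeplitz p w (j - a) = p (j - a - w) := by
        simp [toeplitz, hw]
      rw [hT]
      congr 2
      omega
    · have hT : toeplitz p w (j - a) = 0 := by
        simp [toeplitz, hw]
      rw [hT, zero_mul]
      refine (Finset.sum_eq_zero fun k _ => ?_).symm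
      rw [if_neg (by omega)]
  · rw [Finset.sum_eq_zero fun x _ => by rw [if_neg (by omega)],
      Finset.sum_eq_zero fun k _ => by rw [if_neg (by omega)]]

lemma two_row {p : ℕ → ℝ} (hnn : ∀ n, 0 ≤ p n) (hTN : IsTN 2 (toeplitz p))
    {F G : PowerSeries ℝ} (hF : ∀ n, 0 ≤ PowerSeries.coeff n F)
    (hG : ∀ n, 0 ≤ PowerSeries.coeff n G) (h : LR F G) (j t : ℕ) :
    (PowerSeries.trunc (t+1) (F * PowerSeries.mk p) * PowerSeries.trunc (t+1) G).coeff j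
      ≤ (PowerSeries.trunc (t+1) F * PowerSeries.trunc (t+1) (G * PowerSeries.mk p)).coeff j := by
  set N := j + 1 with hN
  have hjN : j < N := by omega
  -- normal form for the left side
  have hL : (PowerSeries.trunc (t+1) (F * PowerSeries.mk p) * PowerSeries.trunc (t+1) G).coeff j
      = ∑ k ∈ range N, ∑ a ∈ range N, ∑ b ∈ range N,
          (if a + k + b = j then
            p k * (if a + k ≤ t then (if b ≤ t then
              PowerSeries.coeff a F * PowerSeries.coeff b G else 0) else 0) else 0) := by
    rw [coeff_mul_trunc_expand _ _ j t N hjN]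
    have e2 : ∀ u ∈ range N, (fun u => ∑ v ∈ range N,
        (if u + v = j then
          ((if u ≤ t then PowerSeries.coeff u (F * PowerSeries.mk p) else 0) *
           (if v ≤ t then PowerSeries.coeff v G else 0)) else 0)) u
        = ∑ v ∈ range N, ∑ w ∈ range N,
            (if u + v = j then toeplitz p w u *
              (if u ≤ t then (if v ≤ t then
                PowerSeries.coeff w F * PowerSeries.coeff v G else 0) else 0) else 0) := by
      intro u hu
      refine Finset.sum_congr rfl fun v hv => ?_
      by_cases hc : u + v = j
      · simp only [if_pos hc]
        by_cases hut : u ≤ t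
        · by_cases hvt : v ≤ t
          · simp only [if_pos hut, if_pos hvt]
            rw [coeff_mul_mk F u N (Finset.mem_range.1 hu), Finset.sum_mul]
            exact Finset.sum_congr rfl fun w _ => by ring
          · simp [hut, hvt]
        · simp [hut]
      · simp [hc]
    rw [Finset.sum_congr rfl e2]
    calc
      ∑ u ∈ range N, ∑ v ∈ range N, ∑ w ∈ range N,
          (if u + v = j then toeplitz p w u *
            (if u ≤ t then (if v ≤ t then
              PowerSeries.coeff w F * PowerSeries.coeff v G else 0) else 0) else 0)
        = ∑ v ∈ range N, ∑ u ∈ range N, ∑ w ∈ range N,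
          (if u + v = j then toeplitz p w u *
            (if u ≤ t then (if v ≤ t then
              PowerSeries.coeff w F * PowerSeries.coeff v G else 0) else 0) else 0) :=
        Finset.sum_comm
      _ = ∑ v ∈ range N, ∑ w ∈ range N, ∑ u ∈ range N,
          (if u + v = j then toeplitz p w u *
            (if u ≤ t then (if v ≤ t then
              PowerSeries.coeff w F * PowerSeries.coeff v G else 0) else 0) else 0) :=
        Finset.sum_congr rfl fun v _ => Finset.sum_comm
      _ = ∑ v ∈ range N, ∑ w ∈ range N, ∑ k ∈ range N,
          (if w + k + v = j then
            p k * (if w + k ≤ t then (if v ≤ t then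
              PowerSeries.coeff w F * PowerSeries.coeff v G else 0) else 0) else 0) :=
        Finset.sum_congr rfl fun v _ => Finset.sum_congr rfl fun w _ =>
          reindex p w v j N hjN
            (fun x => if x ≤ t then (if v ≤ t then
              PowerSeries.coeff w F * PowerSeries.coeff v G else 0) else 0)
      _ = ∑ w ∈ range N, ∑ v ∈ range N, ∑ k ∈ range N,
          (if w + k + v = j then
            p k * (if w + k ≤ t then (if v ≤ t then
              PowerSeries.coeff w F * PowerSeries.coeff v G else 0) else 0) else 0) :=
        Finset.sum_comm
      _ = ∑ w ∈ range N, ∑ k ∈ range N, ∑ v ∈ range N,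
          (if w + k + v = j then
            p k * (if w + k ≤ t then (if v ≤ t then
              PowerSeries.coeff w F * PowerSeries.coeff v G else 0) else 0) else 0) :=
        Finset.sum_congr rfl fun w _ => Finset.sum_comm
      _ = ∑ k ∈ range N, ∑ w ∈ range N, ∑ v ∈ range N,
          (if w + k + v = j then
            p k * (if w + k ≤ t then (if v ≤ t then
              PowerSeries.coeff w F * PowerSeries.coeff v G else 0) else 0) else 0) :=
        Finset.sum_comm
  -- normal form for the right side
  have hR : (PowerSeries.trunc (t+1) F * PowerSeries.trunc (t+1) (G * PowerSeries.mk p)).coeff j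
      = ∑ k ∈ range N, ∑ a ∈ range N, ∑ b ∈ range N,
          (if a + k + b = j then
            p k * (if b + k ≤ t then (if a ≤ t then
              PowerSeries.coeff a F * PowerSeries.coeff b G else 0) else 0) else 0) := by
    rw [coeff_mul_trunc_expand _ _ j t N hjN]
    have e2 : ∀ u ∈ range N, (fun u => ∑ v ∈ range N,
        (if u + v = j then
          ((if u ≤ t then PowerSeries.coeff u F else 0) *
           (if v ≤ t then PowerSeries.coeff v (G * PowerSeries.mk p) else 0)) else 0)) u
        = ∑ v ∈ range N, ∑ w ∈ range N,
            (if v + u = j then toeplitz p w v *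
              (if v ≤ t then (if u ≤ t then
                PowerSeries.coeff u F * PowerSeries.coeff w G else 0) else 0) else 0) := by
      intro u hu
      refine Finset.sum_congr rfl fun v hv => ?_
      by_cases hc : u + v = j
      · rw [if_pos hc]
        by_cases hvt : v ≤ t
        · by_cases hut : u ≤ t
          · simp only [if_pos hut, if_pos hvt]
            rw [coeff_mul_mk G v N (Finset.mem_range.1 hv), Finset.mul_sum]
            refine (Finset.sum_congr rfl fun w _ => ?_)
            rw [if_pos (show v + u = j by omega)]
            ring
          · rw [if_neg hut, zero_mul]
            refine (Finset.sum_eq_zero fun w _ => ?_).symm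
            rw [if_pos (show v + u = j by omega), if_pos hvt, if_neg hut, mul_zero]
        · rw [if_neg hvt, mul_zero]
          refine (Finset.sum_eq_zero fun w _ => ?_).symm
          rw [if_pos (show v + u = j by omega), if_neg hvt, mul_zero]
      · rw [if_neg hc]
        refine (Finset.sum_eq_zero fun w _ => ?_).symm
        rw [if_neg (show ¬ v + u = j by omega)]
    rw [Finset.sum_congr rfl e2]
    calc
      ∑ u ∈ range N, ∑ v ∈ range N, ∑ w ∈ range N,
          (if v + u = j then toeplitz p w v *
            (if v ≤ t then (if u ≤ t then
              PowerSeries.coeff u F * PowerSeries.coeff w G else 0) else 0) else 0)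
        = ∑ u ∈ range N, ∑ w ∈ range N, ∑ v ∈ range N,
          (if v + u = j then toeplitz p w v *
            (if v ≤ t then (if u ≤ t then
              PowerSeries.coeff u F * PowerSeries.coeff w G else 0) else 0) else 0) :=
        Finset.sum_congr rfl fun u _ => Finset.sum_comm
      _ = ∑ u ∈ range N, ∑ w ∈ range N, ∑ k ∈ range N,
          (if w + k + u = j then
            p k * (if w + k ≤ t then (if u ≤ t then
              PowerSeries.coeff u F * PowerSeries.coeff w G else 0) else 0) else 0) :=
        Finset.sum_congr rfl fun u _ => Finset.sum_congr rfl fun w _ =>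
          reindex p w u j N hjN
            (fun x => if x ≤ t then (if u ≤ t then
              PowerSeries.coeff u F * PowerSeries.coeff w G else 0) else 0)
      _ = ∑ u ∈ range N, ∑ k ∈ range N, ∑ w ∈ range N,
          (if u + k + w = j then
            p k * (if w + k ≤ t then (if u ≤ t then
              PowerSeries.coeff u F * PowerSeries.coeff w G else 0) else 0) else 0) := by
        refine Finset.sum_congr rfl fun u _ => ?_
        rw [show (∑ w ∈ range N, ∑ k ∈ range N,
            (if w + k + u = j then
              p k * (if w + k ≤ t then (if u ≤ t then
                PowerSeries.coeff u F * PowerSeries.coeff w G else 0) else 0) else 0))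
          = ∑ k ∈ range N, ∑ w ∈ range N,
            (if w + k + u = j then
              p k * (if w + k ≤ t then (if u ≤ t then
                PowerSeries.coeff u F * PowerSeries.coeff w G else 0) else 0) else 0)
          from Finset.sum_comm]
        exact Finset.sum_congr rfl fun k _ => Finset.sum_congr rfl fun w _ =>
          if_congr (by omega) rfl rfl
      _ = ∑ k ∈ range N, ∑ u ∈ range N, ∑ w ∈ range N,
          (if u + k + w = j then
            p k * (if w + k ≤ t then (if u ≤ t then
              PowerSeries.coeff u F * PowerSeries.coeff w G else 0) else 0) else 0) :=
        Finset.sum_comm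
  rw [hL, hR]
  refine Finset.sum_le_sum fun k _ => ?_
  refine sym_sum_le (range N) _ _ fun a _ b _ => ?_
  -- pointwise symmetric inequality
  have main : ∀ a b : ℕ, b ≤ a →
      (if a + k + b = j then
        p k * (if a + k ≤ t then (if b ≤ t then
          PowerSeries.coeff a F * PowerSeries.coeff b G else 0) else 0) else 0)
      + (if b + k + a = j then
        p k * (if b + k ≤ t then (if a ≤ t then
          PowerSeries.coeff b F * PowerSeries.coeff a G else 0) else 0) else 0)
      ≤ (if a + k + b = j then
        p k * (if b + k ≤ t then (if a ≤ t then
          PowerSeries.coeff a F * PowerSeries.coeff b G else 0) else 0) else 0)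
      + (if b + k + a = j then
        p k * (if a + k ≤ t then (if b ≤ t then
          PowerSeries.coeff b F * PowerSeries.coeff a G else 0) else 0) else 0) := by
    intro a b hba
    by_cases hc : a + k + b = j
    · have hc' : b + k + a = j := by omega
      simp only [if_pos hc, if_pos hc']
      have hX : PowerSeries.coeff b F * PowerSeries.coeff a G ≤
          PowerSeries.coeff a F * PowerSeries.coeff b G := h hba
      have hp := hnn k
      have hpXY : p k * (PowerSeries.coeff b F * PowerSeries.coeff a G) ≤
          p k * (PowerSeries.coeff a F * PowerSeries.coeff b G) :=
        mul_le_mul_of_nonneg_left hX hp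
      have hpY : 0 ≤ p k * (PowerSeries.coeff b F * PowerSeries.coeff a G) :=
        mul_nonneg hp (mul_nonneg (hF b) (hG a))
      split_ifs with h1 h2 h3 h4 h5 h6 h7 h8 h9 h10 h11 h12 <;>
        first
          | linarith
          | (exfalso; omega)
          | simp_all
    · have hc' : ¬ b + k + a = j := by omega
      simp only [if_neg hc, if_neg hc']
      norm_num
  rcases le_total b a with hba | hab
  · exact main a b hba
  · linarith [main b a hab]

lemma coeff_prod_nonneg (s : Finset ℕ) (f : ℕ → Polynomial ℝ)
    (hf : ∀ i ∈ s, ∀ n, 0 ≤ (f i).coeff n) :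
    ∀ n, 0 ≤ (∏ i ∈ s, f i).coeff n := by
  refine Finset.prod_induction f (fun q => ∀ n, 0 ≤ q.coeff n) ?_ ?_ hf
  · intro a b ha hb n
    rw [Polynomial.coeff_mul]
    exact Finset.sum_nonneg fun x _ => mul_nonneg (ha _) (hb _)
  · intro n
    rw [Polynomial.coeff_one]
    split <;> norm_num

lemma coeff_trunc_nonneg {p : ℕ → ℝ} (hnn : ∀ n, 0 ≤ p n) (c t n : ℕ) :
    0 ≤ (PowerSeries.trunc t (PowerSeries.mk p ^ c)).coeff n := by
  rw [PowerSeries.coeff_trunc]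
  split
  · exact coeff_mk_pow_nonneg hnn c n
  · exact le_rfl

lemma coeffLE_mul {q r s : Polynomial ℝ} (h : ∀ n, q.coeff n ≤ r.coeff n)
    (hq : ∀ n, 0 ≤ q.coeff n) (hs : ∀ n, 0 ≤ s.coeff n) (j : ℕ) :
    (q * s).coeff j ≤ (r * s).coeff j := by
  rw [Polynomial.coeff_mul, Polynomial.coeff_mul]
  exact Finset.sum_le_sum fun x _ => mul_le_mul_of_nonneg_right (h x.1) (hs x.2)

/-- moving one unit from row `r` (larger value) to row `s` -/
lemma step {p : ℕ → ℝ} (hnn : ∀ n, 0 ≤ p n) (hTN : IsTN 2 (toeplitz p))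
    (g : ℕ → ℕ) (t N r s : ℕ) (hr : r ∈ Finset.Icc 1 N) (hs : s ∈ Finset.Icc 1 N)
    (hrs : r ≠ s) (hab : g s < g r) (j : ℕ) :
    (∏ i ∈ Finset.Icc 1 N, PowerSeries.trunc (t+1) (PowerSeries.mk p ^ g i)).coeff j
      ≤ (∏ i ∈ Finset.Icc 1 N, PowerSeries.trunc (t+1) (PowerSeries.mk p ^
          (fun i => if i = r then g r - 1 else if i = s then g s + 1 else g i) i)).coeff j := by
  set g' : ℕ → ℕ := fun i => if i = r then g r - 1 else if i = s then g s + 1 else g i with hg'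
  have hs' : s ∈ (Finset.Icc 1 N).erase r := Finset.mem_erase.2 ⟨fun hh => hrs hh.symm, hs⟩
  have e1 : ∀ h : ℕ → ℕ, ∏ i ∈ Finset.Icc 1 N, PowerSeries.trunc (t+1) (PowerSeries.mk p ^ h i)
      = PowerSeries.trunc (t+1) (PowerSeries.mk p ^ h r) *
        PowerSeries.trunc (t+1) (PowerSeries.mk p ^ h s) *
        ∏ i ∈ ((Finset.Icc 1 N).erase r).erase s,
          PowerSeries.trunc (t+1) (PowerSeries.mk p ^ h i) := by
    intro h
    rw [← Finset.mul_prod_erase _ _ hr, ← Finset.mul_prod_erase _ _ hs', mul_assoc]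
  rw [e1 g, e1 g']
  have hrest : ∀ i ∈ ((Finset.Icc 1 N).erase r).erase s, g' i = g i := by
    intro i hi
    rw [Finset.mem_erase, Finset.mem_erase] at hi
    simp only [hg', if_neg hi.2.1, if_neg hi.1]
  rw [show (∏ i ∈ ((Finset.Icc 1 N).erase r).erase s,
        PowerSeries.trunc (t+1) (PowerSeries.mk p ^ g' i))
      = ∏ i ∈ ((Finset.Icc 1 N).erase r).erase s,
        PowerSeries.trunc (t+1) (PowerSeries.mk p ^ g i)
    from Finset.prod_congr rfl fun i hi => by rw [hrest i hi]]
  refine coeffLE_mul ?_ ?_ ?_ j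
  · -- the two-row inequality
    intro n
    set a := g r - 1 with ha
    set b := g s with hb
    have hba : b ≤ a := by omega
    have hLR : LR (PowerSeries.mk p ^ a) (PowerSeries.mk p ^ b) := by
      have := lr_pow hnn hTN b (a - b)
      rwa [show b + (a - b) = a by omega] at this
    have key := two_row hnn hTN (coeff_mk_pow_nonneg hnn a) (coeff_mk_pow_nonneg hnn b) hLR n t
    rw [← pow_succ, ← pow_succ] at key
    rw [show g' r = a from by simp [hg'],
      show g' s = b + 1 from by simp [hg', Ne.symm hrs],
      show g r = a + 1 from by omega]
    exact key
  · intro n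
    rw [Polynomial.coeff_mul]
    exact Finset.sum_nonneg fun x _ =>
      mul_nonneg (coeff_trunc_nonneg hnn _ _ _) (coeff_trunc_nonneg hnn _ _ _)
  · exact coeff_prod_nonneg _ _ fun i _ n => coeff_trunc_nonneg hnn _ _ _

lemma sum_split2 (A : Finset ℕ) (f : ℕ → ℕ) {r s : ℕ} (hr : r ∈ A) (hs : s ∈ A)
    (hrs : r ≠ s) :
    ∑ i ∈ A, f i = f r + f s + ∑ i ∈ (A.erase r).erase s, f i := by
  have hs' : s ∈ A.erase r := Finset.mem_erase.2 ⟨fun hh => hrs hh.symm, hs⟩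
  rw [← Finset.add_sum_erase A f hr, ← Finset.add_sum_erase (A.erase r) f hs']
  ring

lemma main_induction {p : ℕ → ℝ} (hnn : ∀ n, 0 ≤ p n) (hTN : IsTN 2 (toeplitz p))
    (mu : PartitionSeq) (N : ℕ) (hmu0 : ∀ i, i ∉ Finset.Icc 1 N → mu.part i = 0) :
    ∀ (m : ℕ) (g : ℕ → ℕ),
      (∀ i, i ∉ Finset.Icc 1 N → g i = 0) →
      (∀ j, 1 ≤ j → ∑ i ∈ Finset.Icc 1 j, mu.part i ≤ ∑ i ∈ Finset.Icc 1 j, g i) →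
      (∑ i ∈ Finset.Icc 1 N, g i = ∑ i ∈ Finset.Icc 1 N, mu.part i) →
      (∑ i ∈ Finset.Icc 1 N, ((g i - mu.part i) + (mu.part i - g i)) ≤ m) →
      ∀ j t, (∏ i ∈ Finset.Icc 1 N, PowerSeries.trunc (t+1) (PowerSeries.mk p ^ g i)).coeff j
        ≤ (∏ i ∈ Finset.Icc 1 N, PowerSeries.trunc (t+1) (PowerSeries.mk p ^ mu.part i)).coeff j := by
  intro m
  induction m with
  | zero =>
      intro g hg0 _ _ hm j t
      have hz : ∀ i ∈ Finset.Icc 1 N, ((g i - mu.part i) + (mu.part i - g i)) = 0 :=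
        Finset.sum_eq_zero_iff.1 (Nat.le_zero.1 hm)
      have : ∀ i ∈ Finset.Icc 1 N, g i = mu.part i := fun i hi => by
        have := hz i hi; omega
      exact le_of_eq (by rw [Finset.prod_congr rfl fun i hi => by rw [this i hi]])
  | succ m ih =>
      intro g hg0 hpre htot hm j t
      by_cases heq : ∀ i, g i = mu.part i
      · exact le_of_eq (by rw [Finset.prod_congr rfl fun i _ => by rw [heq i]])
      · push_neg at heq
        -- least index where they differ
        have H : ∃ i, g i ≠ mu.part i := heq
        set r := Nat.find H with hrdef
        have hrne : g r ≠ mu.part r := Nat.find_spec H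
        have hrmin : ∀ i, i < r → g i = mu.part i := fun i hi =>
          not_not.1 (Nat.find_min H hi)
        have hrIcc : r ∈ Finset.Icc 1 N := by
          by_contra hc
          exact hrne (by rw [hg0 r hc, hmu0 r hc])
        have hr1 : 1 ≤ r := (Finset.mem_Icc.1 hrIcc).1
        -- g r > mu r via prefix sums
        have hgr : mu.part r < g r := by
          have h1 := hpre r hr1
          have hrr : r ∈ Finset.Icc 1 r := Finset.mem_Icc.2 ⟨hr1, le_rfl⟩
          rw [← Finset.add_sum_erase _ mu.part hrr, ← Finset.add_sum_erase _ g hrr] at h1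
          have h2 : ∑ i ∈ (Finset.Icc 1 r).erase r, mu.part i
              = ∑ i ∈ (Finset.Icc 1 r).erase r, g i := by
            refine Finset.sum_congr rfl fun i hi => ?_
            rw [Finset.mem_erase, Finset.mem_Icc] at hi
            exact (hrmin i (by omega)).symm
          omega
        -- least index where g < mu
        have H2 : ∃ i, g i < mu.part i := by
          by_contra hno
          push_neg at hno
          have : ∑ i ∈ Finset.Icc 1 N, mu.part i < ∑ i ∈ Finset.Icc 1 N, g i :=
            Finset.sum_lt_sum (fun i _ => hno i) ⟨r, hrIcc, hgr⟩
          omega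
        set s := Nat.find H2 with hsdef
        have hsgt : g s < mu.part s := Nat.find_spec H2
        have hsmin : ∀ i, i < s → mu.part i ≤ g i := fun i hi =>
          not_lt.1 (Nat.find_min H2 hi)
        clear_value r
        clear_value s
        have hrs : r < s := by
          rcases lt_trichotomy r s with h | h | h
          · exact h
          · rw [h] at hgr; omega
          · have := hrmin s h; omega
        have hsIcc : s ∈ Finset.Icc 1 N := by
          rw [Finset.mem_Icc]
          constructor
          · omega
          · by_contra hc
            have : s ∉ Finset.Icc 1 N := by rw [Finset.mem_Icc]; omega
            have h1 := hg0 s this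
            have h2 := hmu0 s this
            omega
        have hval : g s < g r := by
          have := mu.antitone hr1 (le_of_lt hrs)
          omega
        -- the moved configuration
        set g' : ℕ → ℕ := fun i => if i = r then g r - 1 else if i = s then g s + 1 else g i
          with hg'def
        have hstep := step hnn hTN g t N r s hrIcc hsIcc (Nat.ne_of_lt hrs) hval j
        -- partial-sum bookkeeping
        have hsum : ∀ J : ℕ, (∑ i ∈ Finset.Icc 1 J, g' i) + (if r ≤ J then 1 else 0)
            = (∑ i ∈ Finset.Icc 1 J, g i) + (if s ≤ J then 1 else 0) := by
          intro J
          by_cases hsJ : s ≤ J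
          · have hrJ : r ≤ J := by omega
            have hrm : r ∈ Finset.Icc 1 J := Finset.mem_Icc.2 ⟨hr1, hrJ⟩
            have hsm : s ∈ Finset.Icc 1 J := Finset.mem_Icc.2 ⟨by omega, hsJ⟩
            rw [sum_split2 _ g' hrm hsm (Nat.ne_of_lt hrs),
              sum_split2 _ g hrm hsm (Nat.ne_of_lt hrs)]
            have e1 : ∑ i ∈ ((Finset.Icc 1 J).erase r).erase s, g' i
                = ∑ i ∈ ((Finset.Icc 1 J).erase r).erase s, g i := by
              refine Finset.sum_congr rfl fun i hi => ?_
              rw [Finset.mem_erase, Finset.mem_erase] at hi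
              simp only [hg'def, if_neg hi.2.1, if_neg hi.1]
            have e2 : g' r = g r - 1 := by simp [hg'def]
            have e3 : g' s = g s + 1 := by
              simp [hg'def, Nat.ne_of_gt hrs]
            rw [e1, e2, e3, if_pos hrJ, if_pos hsJ]
            omega
          · by_cases hrJ : r ≤ J
            · have hrm : r ∈ Finset.Icc 1 J := Finset.mem_Icc.2 ⟨hr1, hrJ⟩
              rw [← Finset.add_sum_erase _ g' hrm, ← Finset.add_sum_erase _ g hrm]
              have e1 : ∑ i ∈ (Finset.Icc 1 J).erase r, g' i
                  = ∑ i ∈ (Finset.Icc 1 J).erase r, g i := by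
                refine Finset.sum_congr rfl fun i hi => ?_
                rw [Finset.mem_erase, Finset.mem_Icc] at hi
                have his : i ≠ s := by omega
                simp only [hg'def, if_neg hi.1, if_neg his]
              have e2 : g' r = g r - 1 := by simp [hg'def]
              rw [e1, e2, if_pos hrJ, if_neg hsJ]
              omega
            · have e1 : ∑ i ∈ Finset.Icc 1 J, g' i = ∑ i ∈ Finset.Icc 1 J, g i := by
                refine Finset.sum_congr rfl fun i hi => ?_
                rw [Finset.mem_Icc] at hi
                have hir : i ≠ r := by omega
                have his : i ≠ s := by omega
                simp only [hg'def, if_neg hir, if_neg his]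
              rw [e1, if_neg hrJ, if_neg hsJ]
      -- apply the induction hypothesis to g'
        refine le_trans hstep (ih g' ?_ ?_ ?_ ?_ j t)
        · intro i hi
          have hir : i ≠ r := fun hh => hi (hh ▸ hrIcc)
          have his : i ≠ s := fun hh => hi (hh ▸ hsIcc)
          simp only [hg'def, if_neg hir, if_neg his]
          exact hg0 i hi
        · intro J hJ
          have hf := hsum J
          by_cases hrJ : r ≤ J
          · by_cases hsJ : s ≤ J
            · rw [if_pos hrJ, if_pos hsJ] at hf
              have := hpre J hJ; omega
            · -- need strict inequality: mu-sum < g-sum on Icc 1 J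
              rw [if_pos hrJ, if_neg hsJ] at hf
              have hstrict : ∑ i ∈ Finset.Icc 1 J, mu.part i < ∑ i ∈ Finset.Icc 1 J, g i := by
                refine Finset.sum_lt_sum (fun i hi => ?_) ⟨r, Finset.mem_Icc.2 ⟨hr1, hrJ⟩, hgr⟩
                rw [Finset.mem_Icc] at hi
                exact hsmin i (by omega)
              omega
          · have hsJ : ¬ s ≤ J := by omega
            rw [if_neg hrJ, if_neg hsJ] at hf
            have := hpre J hJ; omega
        · have hf := hsum N
          rw [if_pos ((Finset.mem_Icc.1 hrIcc).2), if_pos ((Finset.mem_Icc.1 hsIcc).2)] at hf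
          omega
        · -- measure decreases by 2
          rw [sum_split2 _ _ hrIcc hsIcc (Nat.ne_of_lt hrs)] at hm ⊢
          have e1 : ∑ i ∈ ((Finset.Icc 1 N).erase r).erase s,
                ((g' i - mu.part i) + (mu.part i - g' i))
              = ∑ i ∈ ((Finset.Icc 1 N).erase r).erase s,
                ((g i - mu.part i) + (mu.part i - g i)) := by
            refine Finset.sum_congr rfl fun i hi => ?_
            rw [Finset.mem_erase, Finset.mem_erase] at hi
            simp only [hg'def, if_neg hi.2.1, if_neg hi.1]
          have e2 : g' r = g r - 1 := by simp [hg'def]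
          have e3 : g' s = g s + 1 := by simp [hg'def, Nat.ne_of_gt hrs]
          rw [e1, e2, e3]
          omega


end CondCAux

/-- **Theorem.** If `X` is an ℕ-valued random variable with `X ∈ TN₂`, then for
all partitions `λ, μ`, `λ ⊵ μ` implies `C(λ,μ,X)`. -/
theorem condC_of_dominates (p : ℕ → ℝ) (hnn : ∀ n, 0 ≤ p n) (hsum : HasSum p 1)
    (hTN : IsTN 2 (toeplitz p)) (lam mu : PartitionSeq)
    (h : lam.Dominates mu) : CondC p lam mu := by
  intro j t
  obtain ⟨N, hN⟩ : ∃ N : ℕ, ∀ i,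
      i ∈ Function.support lam.part ∪ Function.support mu.part → i ≤ N := by
    obtain ⟨N, hNb⟩ := (lam.finSupp.union mu.finSupp).bddAbove
    exact ⟨N, fun i hi => hNb hi⟩
  have h0 : ∀ (nu : PartitionSeq), (∀ i, i ∈ Function.support nu.part → i ≤ N) →
      ∀ i, i ∉ Finset.Icc 1 N → nu.part i = 0 := by
    intro nu hnu i hi
    rw [Finset.mem_Icc] at hi
    push_neg at hi
    by_contra hne
    rcases Nat.eq_zero_or_pos i with rfl | h1
    · exact hne nu.zero
    · have := hnu i (Function.mem_support.2 hne)
      omega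
  have hlam0 := h0 lam fun i hi => hN i (Or.inl hi)
  have hmu0 := h0 mu fun i hi => hN i (Or.inr hi)
  have hprod : ∀ (nu : PartitionSeq), (∀ i, i ∉ Finset.Icc 1 N → nu.part i = 0) →
      fPoly nu p t = ∏ i ∈ Finset.Icc 1 N,
        PowerSeries.trunc (t+1) (PowerSeries.mk p ^ nu.part i) := by
    intro nu h0'
    refine finprod_eq_prod_of_mulSupport_subset _ fun i hi => ?_
    by_contra hc
    apply hi
    show PowerSeries.trunc (t+1) (PowerSeries.mk p ^ nu.part i) = 1
    rw [h0' i (by simpa using hc), pow_zero, PowerSeries.trunc_one]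
  have hweight : ∀ (nu : PartitionSeq), (∀ i, i ∉ Finset.Icc 1 N → nu.part i = 0) →
      nu.weight = ∑ i ∈ Finset.Icc 1 N, nu.part i := by
    intro nu h0'
    refine finsum_eq_sum_of_support_subset _ fun i hi => ?_
    by_contra hc
    exact hi (h0' i (by simpa using hc))
  have htot : ∑ i ∈ Finset.Icc 1 N, lam.part i = ∑ i ∈ Finset.Icc 1 N, mu.part i := by
    rw [← hweight lam hlam0, ← hweight mu hmu0]
    exact h.1
  show (fPoly lam p t).coeff j ≤ (fPoly mu p t).coeff j
  rw [hprod lam hlam0, hprod mu hmu0]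
  exact CondCAux.main_induction hnn hTN mu N hmu0
    (∑ i ∈ Finset.Icc 1 N, ((lam.part i - mu.part i) + (mu.part i - lam.part i)))
    lam.part hlam0 h.2 htot le_rfl j t
end
end

section
/- Let X be an ℕ-valued random variable with range(X) = {0,1,...,r} for some positive integer r. Then for all partitions λ and μ with |λ| = |μ|, if condition C(λ,μ,X) holds then λ dominates μ. -/
open Finset

noncomputable section

section Aux

variable (p : ℕ → ℝ)


variable (p : ℕ → ℝ)

lemma coeff_pow_nonneg (hnn : ∀ n, 0 ≤ p n) (k : ℕ) :
    ∀ d, 0 ≤ PowerSeries.coeff d (PowerSeries.mk p ^ k) := by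
  induction k with
  | zero =>
    intro d
    simp only [pow_zero, PowerSeries.coeff_one]
    split <;> norm_num
  | succ k ih =>
    intro d
    rw [pow_succ, PowerSeries.coeff_mul]
    refine Finset.sum_nonneg fun x _ => ?_
    exact mul_nonneg (ih x.1) (by simpa using hnn x.2)

lemma coeff_pow_eq_zero {r : ℕ} (hrange : ∀ n, p n ≠ 0 ↔ n ≤ r) (k : ℕ) :
    ∀ d, r * k < d → PowerSeries.coeff d (PowerSeries.mk p ^ k) = 0 := by
  induction k with
  | zero =>
    intro d hd
    simp only [pow_zero, PowerSeries.coeff_one]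
    rw [if_neg (by omega)]
  | succ k ih =>
    intro d hd
    rw [pow_succ, PowerSeries.coeff_mul]
    refine Finset.sum_eq_zero fun x hx => ?_
    rw [Finset.HasAntidiagonal.mem_antidiagonal] at hx
    by_cases h1 : r * k < x.1
    · rw [ih x.1 h1, zero_mul]
    · have hrk : r * (k + 1) = r * k + r := by ring
      have h2 : r < x.2 := by push_neg at h1; omega
      have : p x.2 = 0 := by
        by_contra hc
        exact absurd ((hrange x.2).mp hc) (by omega)
      simp [this]

lemma coeff_pow_pos {r : ℕ} (hnn : ∀ n, 0 ≤ p n)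
    (hrange : ∀ n, p n ≠ 0 ↔ n ≤ r) (k : ℕ) :
    ∀ d, d ≤ r * k → 0 < PowerSeries.coeff d (PowerSeries.mk p ^ k) := by
  induction k with
  | zero =>
    intro d hd
    have : d = 0 := by omega
    simp [this]
  | succ k ih =>
    intro d hd
    rw [pow_succ, PowerSeries.coeff_mul]
    simp only [PowerSeries.coeff_mk]
    set b := min d r with hb
    set a := d - b with ha
    have hab : a + b = d := by omega
    have hbr : b ≤ r := by omega
    have hark : a ≤ r * k := by
      rcases le_or_gt d r with h | h
      · have : b = d := by omega
        omega
      · have : b = r := by omega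
        have : a = d - r := by omega
        have : d ≤ r * k + r := by nlinarith
        omega
    have hpb : 0 < p b := lt_of_le_of_ne (hnn b) (Ne.symm ((hrange b).mpr hbr))
    have hterm : 0 < PowerSeries.coeff a (PowerSeries.mk p ^ k) * p b :=
      mul_pos (ih a hark) hpb
    have hmem : (a, b) ∈ Finset.HasAntidiagonal.antidiagonal d := by
      rw [Finset.HasAntidiagonal.mem_antidiagonal]; exact hab
    have hle := Finset.single_le_sum (f := fun x : ℕ × ℕ =>
        PowerSeries.coeff x.1 (PowerSeries.mk p ^ k) *
          PowerSeries.coeff x.2 (PowerSeries.mk p))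
      (fun x _ => mul_nonneg (coeff_pow_nonneg p hnn k x.1) (by simpa using hnn x.2)) hmem
    simp only [PowerSeries.coeff_mk] at hle
    linarith


def Good (q : Polynomial ℝ) (d : ℕ) : Prop :=
  (∀ n, 0 ≤ q.coeff n) ∧ 0 < q.coeff d ∧ ∀ n, d < n → q.coeff n = 0

lemma good_one : Good 1 0 := by
  refine ⟨fun n => ?_, by simp, fun n hn => ?_⟩
  · simp only [Polynomial.coeff_one]; split <;> norm_num
  · simp only [Polynomial.coeff_one]; rw [if_neg (by omega)]

lemma good_mul {q q' : Polynomial ℝ} {d d' : ℕ} (h : Good q d) (h' : Good q' d') :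
    Good (q * q') (d + d') := by
  obtain ⟨hnn, hpos, hz⟩ := h
  obtain ⟨hnn', hpos', hz'⟩ := h'
  refine ⟨fun n => ?_, ?_, fun n hn => ?_⟩
  · rw [Polynomial.coeff_mul]
    exact Finset.sum_nonneg fun x _ => mul_nonneg (hnn x.1) (hnn' x.2)
  · rw [Polynomial.coeff_mul]
    have hmem : (d, d') ∈ Finset.HasAntidiagonal.antidiagonal (d + d') := by
      rw [Finset.HasAntidiagonal.mem_antidiagonal]
    have hle := Finset.single_le_sum (f := fun x : ℕ × ℕ => q.coeff x.1 * q'.coeff x.2)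
      (fun x _ => mul_nonneg (hnn x.1) (hnn' x.2)) hmem
    simp only at hle
    have : 0 < q.coeff d * q'.coeff d' := mul_pos hpos hpos'
    linarith
  · rw [Polynomial.coeff_mul]
    refine Finset.sum_eq_zero fun x hx => ?_
    rw [Finset.HasAntidiagonal.mem_antidiagonal] at hx
    by_cases h1 : d < x.1
    · rw [hz x.1 h1, zero_mul]
    · rw [hz' x.2 (by omega), mul_zero]

lemma good_prod {ι : Type*} [DecidableEq ι] (s : Finset ι) (q : ι → Polynomial ℝ) (d : ι → ℕ)
    (h : ∀ i ∈ s, Good (q i) (d i)) :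
    Good (∏ i ∈ s, q i) (∑ i ∈ s, d i) := by
  induction s using Finset.induction_on with
  | empty => simpa using good_one
  | insert a s' hns ih =>
    rw [Finset.prod_insert hns, Finset.sum_insert hns]
    exact good_mul (h a (Finset.mem_insert_self a s'))
      (ih fun i hi => h i (Finset.mem_insert_of_mem hi))


lemma good_trunc {r : ℕ} (hnn : ∀ n, 0 ≤ p n) (hrange : ∀ n, p n ≠ 0 ↔ n ≤ r)
    (t k : ℕ) :
    Good (PowerSeries.trunc (t + 1) (PowerSeries.mk p ^ k)) (min t (r * k)) := by
  refine ⟨fun n => ?_, ?_, fun n hn => ?_⟩ <;> rw [PowerSeries.coeff_trunc]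
  · split
    · exact coeff_pow_nonneg p hnn k n
    · exact le_refl 0
  · rw [if_pos (by omega : min t (r * k) < t + 1)]
    exact coeff_pow_pos p hnn hrange k _ (min_le_right _ _)
  · split
    · rename_i hlt
      have : r * k < n := by
        rcases min_lt_iff.mp hn with h | h
        · omega
        · exact h
      exact coeff_pow_eq_zero p hrange k n this
    · rfl

lemma fPoly_eq (lam : PartitionSeq) (t : ℕ) (s : Finset ℕ)
    (hs : Function.support lam.part ⊆ ↑s) :
    fPoly lam p t
      = ∏ i ∈ s, PowerSeries.trunc (t + 1) (PowerSeries.mk p ^ lam.part i) := by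
  refine finprod_eq_prod_of_mulSupport_subset _ fun i hi => hs ?_
  simp only [Function.mem_mulSupport] at hi
  simp only [Function.mem_support]
  intro h0
  exact hi (by rw [h0, pow_zero, PowerSeries.trunc_one])

lemma good_fPoly {r : ℕ} (hnn : ∀ n, 0 ≤ p n) (hrange : ∀ n, p n ≠ 0 ↔ n ≤ r)
    (lam : PartitionSeq) (t : ℕ) (s : Finset ℕ)
    (hs : Function.support lam.part ⊆ ↑s) :
    Good (fPoly lam p t) (∑ i ∈ s, min t (r * lam.part i)) := by
  rw [fPoly_eq p lam t s hs]
  exact good_prod s _ _ fun i _ => good_trunc p hnn hrange t (lam.part i)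

lemma key_min_sum {r : ℕ} (hnn : ∀ n, 0 ≤ p n) (hrange : ∀ n, p n ≠ 0 ↔ n ≤ r)
    (lam mu : PartitionSeq) (h : CondC p lam mu) (s : Finset ℕ)
    (hsl : Function.support lam.part ⊆ ↑s) (hsm : Function.support mu.part ⊆ ↑s)
    (t : ℕ) :
    ∑ i ∈ s, min t (r * lam.part i) ≤ ∑ i ∈ s, min t (r * mu.part i) := by
  by_contra hc
  push_neg at hc
  have gl := good_fPoly p hnn hrange lam t s hsl
  have gm := good_fPoly p hnn hrange mu t s hsm
  have hle := h (∑ i ∈ s, min t (r * lam.part i)) t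
  unfold probE at hle
  rw [gm.2.2 _ hc] at hle
  linarith [gl.2.1]


end Aux

/-- **Theorem.** If `X` is an ℕ-valued random variable with
`range(X) = {0,1,…,r}` for a positive integer `r`, then for all partitions
`λ, μ` with `|λ| = |μ|`, `C(λ,μ,X)` implies `λ ⊵ μ`. -/
theorem dominates_of_condC (p : ℕ → ℝ) (hnn : ∀ n, 0 ≤ p n) (hsum : HasSum p 1)
    (r : ℕ) (hr : 1 ≤ r) (hrange : ∀ n, p n ≠ 0 ↔ n ≤ r)
    (lam mu : PartitionSeq) (hw : lam.weight = mu.weight)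
    (h : CondC p lam mu) : lam.Dominates mu := by
  refine ⟨hw, fun j hj => ?_⟩
  classical
  set m := lam.part j with hm
  set s : Finset ℕ :=
    lam.finSupp.toFinset ∪ mu.finSupp.toFinset ∪ Finset.Icc 1 j with hs
  have hsl : Function.support lam.part ⊆ ↑s := by
    intro i hi
    simp only [hs, Finset.coe_union, Set.mem_union, Finset.mem_coe,
      Set.Finite.mem_toFinset]
    exact Or.inl (Or.inl hi)
  have hsm : Function.support mu.part ⊆ ↑s := by
    intro i hi
    simp only [hs, Finset.coe_union, Set.mem_union, Finset.mem_coe,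
      Set.Finite.mem_toFinset]
    exact Or.inl (Or.inr hi)
  have hIccs : Finset.Icc 1 j ⊆ s := by
    intro i hi
    simp only [hs, Finset.mem_union]
    exact Or.inr hi
  -- step 1: ∑ min m λᵢ ≤ ∑ min m μᵢ over s
  have hkey := key_min_sum p hnn hrange lam mu h s hsl hsm (r * m)
  have hminl : ∀ k : ℕ, min (r * m) (r * k) = r * min m k := by
    intro k
    rcases le_total m k with hk | hk
    · rw [min_eq_left (Nat.mul_le_mul_left r hk), min_eq_left hk]
    · rw [min_eq_right (Nat.mul_le_mul_left r hk), min_eq_right hk]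
  simp only [hminl] at hkey
  rw [← Finset.mul_sum, ← Finset.mul_sum] at hkey
  have hmono : ∑ i ∈ s, min m (lam.part i) ≤ ∑ i ∈ s, min m (mu.part i) :=
    Nat.le_of_mul_le_mul_left hkey (by omega)
  -- step 2: weights as sums over s
  have hwl : lam.weight = ∑ i ∈ s, lam.part i :=
    finsum_eq_sum_of_support_subset _ hsl
  have hwm : mu.weight = ∑ i ∈ s, mu.part i :=
    finsum_eq_sum_of_support_subset _ hsm
  -- step 3: split sums: ∑ f = ∑ min m f + ∑ (f - m)
  have hsplit : ∀ f : ℕ → ℕ,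
      ∑ i ∈ s, f i = (∑ i ∈ s, min m (f i)) + ∑ i ∈ s, (f i - m) := by
    intro f
    rw [← Finset.sum_add_distrib]
    exact Finset.sum_congr rfl fun i _ => by omega
  have hsub : ∑ i ∈ s, (mu.part i - m) ≤ ∑ i ∈ s, (lam.part i - m) := by
    have e1 := hsplit lam.part
    have e2 := hsplit mu.part
    have : ∑ i ∈ s, lam.part i = ∑ i ∈ s, mu.part i := by rw [← hwl, ← hwm, hw]
    omega
  -- step 4: restrict λ-sum to Icc 1 j
  have h4 : ∑ i ∈ s, (lam.part i - m) = ∑ i ∈ Finset.Icc 1 j, (lam.part i - m) := by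
    refine (Finset.sum_subset hIccs fun i _ hi => ?_).symm
    rcases Nat.eq_zero_or_pos i with h0 | h0
    · rw [h0, lam.zero]; omega
    · have hji : j < i := by
        rw [Finset.mem_Icc] at hi; omega
      have := lam.antitone hj (le_of_lt hji)
      omega
  have h5 : ∑ i ∈ Finset.Icc 1 j, (mu.part i - m) ≤ ∑ i ∈ s, (mu.part i - m) :=
    Finset.sum_le_sum_of_subset hIccs
  -- step 5: chain
  have hcard : (Finset.Icc 1 j).card = j := by
    rw [Nat.card_Icc]; omega
  have hchain1 : ∑ i ∈ Finset.Icc 1 j, mu.part i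
      ≤ j * m + ∑ i ∈ Finset.Icc 1 j, (mu.part i - m) := by
    have : ∑ i ∈ Finset.Icc 1 j, mu.part i
        ≤ ∑ i ∈ Finset.Icc 1 j, (m + (mu.part i - m)) :=
      Finset.sum_le_sum fun i _ => by omega
    rwa [Finset.sum_add_distrib, Finset.sum_const, hcard, smul_eq_mul] at this
  have hchain2 : j * m + ∑ i ∈ Finset.Icc 1 j, (lam.part i - m)
      = ∑ i ∈ Finset.Icc 1 j, lam.part i := by
    have : ∀ i ∈ Finset.Icc 1 j, m + (lam.part i - m) = lam.part i := by
      intro i hi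
      rw [Finset.mem_Icc] at hi
      have := lam.antitone hi.1 hi.2
      omega
    calc j * m + ∑ i ∈ Finset.Icc 1 j, (lam.part i - m)
        = ∑ i ∈ Finset.Icc 1 j, (m + (lam.part i - m)) := by
          rw [Finset.sum_add_distrib, Finset.sum_const, hcard, smul_eq_mul]
      _ = ∑ i ∈ Finset.Icc 1 j, lam.part i := Finset.sum_congr rfl this
  omega
end
end

section
/- Let p = {p_n}_{n=0}^∞ be a sequence of real numbers that is TN_2, with generating function p(x) = Σ_{n≥0} p_n x^n. Then for all integers A > B ≥ 0 and all t ∈ ℕ, the polynomial (p^{A+1}(x)|_t)(p^B(x)|_t) is coefficient-wise dominated by (p^A(x)|_t)(p^{B+1}(x)|_t). -/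
open Finset

noncomputable section

private lemma p_nonneg (p : ℕ → ℝ) (hTN : IsTN 2 (toeplitz p)) (n : ℕ) : 0 ≤ p n := by
  have h := hTN 1 (by norm_num) (fun _ => 0) (fun _ => n)
    (fun a b hab => absurd (Subsingleton.elim a b) (ne_of_lt hab))
    (fun a b hab => absurd (Subsingleton.elim a b) (ne_of_lt hab))
  simpa [Matrix.det_fin_one, Matrix.submatrix, toeplitz] using h

private lemma sm2 {y x : ℕ} (h : y < x) : StrictMono ![y, x] := by
  intro a b hab
  fin_cases a <;> fin_cases b <;> simp_all <;> omega

private lemma toep2 (p : ℕ → ℝ) (hTN : IsTN 2 (toeplitz p)) {y x l k : ℕ}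
    (hyx : y ≤ x) (hlk : l ≤ k) :
    toeplitz p y k * toeplitz p x l ≤ toeplitz p y l * toeplitz p x k := by
  rcases eq_or_lt_of_le hyx with rfl | hyx
  · exact le_of_eq (by ring)
  rcases eq_or_lt_of_le hlk with rfl | hlk
  · exact le_of_eq (by ring)
  have h := hTN 2 le_rfl ![y, x] ![l, k] (sm2 hyx) (sm2 hlk)
  rw [Matrix.det_fin_two] at h
  simp only [Matrix.submatrix_apply] at h
  simp only [Matrix.cons_val_zero, Matrix.cons_val_one, Matrix.head_cons] at h
  linarith
private def cc (p : ℕ → ℝ) (m k : ℕ) : ℝ := PowerSeries.coeff k (PowerSeries.mk p ^ m)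

private lemma cc_zero (p : ℕ → ℝ) (k : ℕ) : cc p 0 k = if k = 0 then 1 else 0 := by
  simp [cc, PowerSeries.coeff_one]

private lemma cc_succ (p : ℕ → ℝ) (m k : ℕ) :
    cc p (m + 1) k = ∑ x ∈ Finset.HasAntidiagonal.antidiagonal k, cc p m x.1 * p x.2 := by
  simp [cc, pow_succ, PowerSeries.coeff_mul]

private lemma cc_nonneg (p : ℕ → ℝ) (hp : ∀ n, 0 ≤ p n) (m k : ℕ) : 0 ≤ cc p m k := by
  induction m generalizing k with
  | zero => rw [cc_zero]; split <;> norm_num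
  | succ m ih =>
      rw [cc_succ]
      exact Finset.sum_nonneg fun x _ => mul_nonneg (ih x.1) (hp x.2)

private lemma conv_toep (p : ℕ → ℝ) (w : ℕ → ℝ) (m N : ℕ) (hm : m < N) :
    ∑ x ∈ Finset.HasAntidiagonal.antidiagonal m, w x.1 * p x.2 = ∑ x ∈ Finset.range N, w x * toeplitz p x m := by
  rw [Finset.Nat.sum_antidiagonal_eq_sum_range_succ_mk]
  rw [← Finset.sum_subset (Finset.range_subset_range.2 hm)]
  · exact Finset.sum_congr rfl fun x hx => by
      rw [Finset.mem_range, Nat.lt_succ_iff] at hx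
      rw [toeplitz, if_pos hx]
  · intro x _ hx
    rw [Finset.mem_range, Nat.lt_succ_iff, not_le] at hx
    rw [toeplitz, if_neg (by omega), mul_zero]

private lemma sum_sq_split (g : ℕ → ℕ → ℝ) (N : ℕ) :
    ∑ x ∈ Finset.range N, ∑ y ∈ Finset.range N, g x y =
      (∑ x ∈ Finset.range N, ∑ y ∈ Finset.range x, (g x y + g y x)) +
        ∑ x ∈ Finset.range N, g x x := by
  induction N with
  | zero => simp
  | succ N ih =>
      simp only [Finset.sum_range_succ, Finset.sum_add_distrib] at ih ⊢
      linarith [ih]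

private lemma conv_pair (p : ℕ → ℝ) (hTN : IsTN 2 (toeplitz p)) (u v : ℕ → ℝ)
    (hu : ∀ n, 0 ≤ u n) (hv : ∀ n, 0 ≤ v n)
    (huv : ∀ l k : ℕ, l ≤ k → u k * v l ≤ u l * v k) (l k : ℕ) (hlk : l ≤ k) :
    (∑ x ∈ Finset.HasAntidiagonal.antidiagonal k, u x.1 * p x.2) * (∑ x ∈ Finset.HasAntidiagonal.antidiagonal l, v x.1 * p x.2) ≤
      (∑ x ∈ Finset.HasAntidiagonal.antidiagonal l, u x.1 * p x.2) * (∑ x ∈ Finset.HasAntidiagonal.antidiagonal k, v x.1 * p x.2) := by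
  rw [conv_toep p u k (k+1) (by omega), conv_toep p v l (k+1) (by omega),
      conv_toep p u l (k+1) (by omega), conv_toep p v k (k+1) (by omega)]
  rw [← sub_nonneg, Finset.sum_mul_sum, Finset.sum_mul_sum, ← Finset.sum_sub_distrib]
  simp only [← Finset.sum_sub_distrib]
  have : ∀ x y : ℕ, (u x * toeplitz p x l * (v y * toeplitz p y k) -
      u x * toeplitz p x k * (v y * toeplitz p y l)) =
      u x * v y * (toeplitz p x l * toeplitz p y k - toeplitz p x k * toeplitz p y l) := by
    intro x y; ring
  simp only [this]
  rw [sum_sq_split]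
  apply add_nonneg
  · apply Finset.sum_nonneg; intro x _
    apply Finset.sum_nonneg; intro y hy
    rw [Finset.mem_range] at hy
    have ha : u x * v y - u y * v x ≤ 0 := by linarith [huv y x (le_of_lt hy)]
    have hb : toeplitz p x l * toeplitz p y k - toeplitz p x k * toeplitz p y l ≤ 0 := by
      nlinarith [toep2 p hTN (le_of_lt hy) hlk]
    nlinarith [mul_nonneg (neg_nonneg.2 ha) (neg_nonneg.2 hb)]
  · exact Finset.sum_nonneg fun x _ => le_of_eq (by ring)


private lemma cc_pair (p : ℕ → ℝ) (hTN : IsTN 2 (toeplitz p)) (hp : ∀ n, 0 ≤ p n)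
    (b d : ℕ) : ∀ l k : ℕ, l ≤ k → cc p b k * cc p (b + d) l ≤ cc p b l * cc p (b + d) k := by
  induction b with
  | zero =>
      intro l k hlk
      simp only [Nat.zero_add, cc_zero]
      by_cases hk : k = 0
      · subst hk
        have : l = 0 := by omega
        subst this
        exact le_of_eq rfl
      · rw [if_neg hk, zero_mul]
        have h1 : (0:ℝ) ≤ if l = 0 then (1:ℝ) else 0 := by split <;> norm_num
        exact mul_nonneg h1 (cc_nonneg p hp _ _)
  | succ b ih =>
      intro l k hlk
      have hidx : b + 1 + d = (b + d) + 1 := by omega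
      rw [hidx, cc_succ, cc_succ, cc_succ, cc_succ]
      exact conv_pair p hTN (cc p b) (cc p (b + d)) (cc_nonneg p hp b) (cc_nonneg p hp (b + d))
        ih l k hlk

private def chi (t n : ℕ) : ℝ := if n < t + 1 then 1 else 0

private def wgt (p : ℕ → ℝ) (A B : ℕ) (y : ℕ × ℕ × ℕ) : ℝ :=
  p y.1 * cc p A y.2.1 * cc p B y.2.2

private def fL (p : ℕ → ℝ) (t A B : ℕ) (y : ℕ × ℕ × ℕ) : ℝ :=
  chi t (y.1 + y.2.1) * chi t y.2.2 * wgt p A B y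

private def fR (p : ℕ → ℝ) (t A B : ℕ) (y : ℕ × ℕ × ℕ) : ℝ :=
  chi t y.2.1 * chi t (y.1 + y.2.2) * wgt p A B y

private def S3 (j : ℕ) : Finset (ℕ × ℕ × ℕ) :=
  Finset.filter (fun x => x.1 + x.2.1 + x.2.2 = j)
    (Finset.range (j+1) ×ˢ Finset.range (j+1) ×ˢ Finset.range (j+1))

private lemma mem_S3 {j : ℕ} {x : ℕ × ℕ × ℕ} : x ∈ S3 j ↔ x.1 + x.2.1 + x.2.2 = j := by
  simp only [S3, Finset.mem_filter, Finset.mem_product, Finset.mem_range]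
  omega

private lemma convertL (p : ℕ → ℝ) (A B t j : ℕ) :
    ∑ x ∈ Finset.HasAntidiagonal.antidiagonal j,
        (if x.1 < t+1 then cc p (A+1) x.1 else 0) * (if x.2 < t+1 then cc p B x.2 else 0)
      = ∑ y ∈ S3 j, fL p t A B y := by
  have step1 : ∀ x : ℕ × ℕ,
      (if x.1 < t+1 then cc p (A+1) x.1 else 0) * (if x.2 < t+1 then cc p B x.2 else 0)
        = ∑ z ∈ Finset.HasAntidiagonal.antidiagonal x.1,
            chi t x.1 * chi t x.2 * (p z.2 * cc p A z.1 * cc p B x.2) := by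
    intro x
    have h0 : (if x.1 < t+1 then cc p (A+1) x.1 else 0) * (if x.2 < t+1 then cc p B x.2 else 0)
        = chi t x.1 * chi t x.2 * (cc p (A+1) x.1 * cc p B x.2) := by
      unfold chi; split_ifs <;> ring
    rw [h0, cc_succ, Finset.sum_mul, Finset.mul_sum]
    exact Finset.sum_congr rfl fun z _ => by ring
  simp only [step1]
  rw [Finset.sum_sigma']
  refine Finset.sum_nbij' (fun z => (z.2.2, z.2.1, z.1.2))
    (fun y => ⟨(y.1 + y.2.1, y.2.2), (y.2.1, y.1)⟩) ?_ ?_ ?_ ?_ ?_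
  · rintro ⟨⟨k, l⟩, ⟨x, i⟩⟩ ha
    simp only [Finset.mem_sigma, Finset.HasAntidiagonal.mem_antidiagonal] at ha
    simp only [mem_S3]
    omega
  · rintro ⟨i, k, l⟩ hb
    simp only [mem_S3] at hb
    simp only [Finset.mem_sigma, Finset.HasAntidiagonal.mem_antidiagonal]
    omega
  · rintro ⟨⟨k, l⟩, ⟨x, i⟩⟩ ha
    simp only [Finset.mem_sigma, Finset.HasAntidiagonal.mem_antidiagonal] at ha
    have hk : k = i + x := by omega
    subst hk
    rfl
  · rintro ⟨i, k, l⟩ _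
    rfl
  · rintro ⟨⟨k, l⟩, ⟨x, i⟩⟩ ha
    simp only [Finset.mem_sigma, Finset.HasAntidiagonal.mem_antidiagonal] at ha
    simp only [fL, wgt]
    have : k = i + x := by omega
    subst this
    rfl

private lemma convertR (p : ℕ → ℝ) (A B t j : ℕ) :
    ∑ x ∈ Finset.HasAntidiagonal.antidiagonal j,
        (if x.1 < t+1 then cc p A x.1 else 0) * (if x.2 < t+1 then cc p (B+1) x.2 else 0)
      = ∑ y ∈ S3 j, fR p t A B y := by
  have step1 : ∀ x : ℕ × ℕ,
      (if x.1 < t+1 then cc p A x.1 else 0) * (if x.2 < t+1 then cc p (B+1) x.2 else 0)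
        = ∑ z ∈ Finset.HasAntidiagonal.antidiagonal x.2,
            chi t x.1 * chi t x.2 * (p z.2 * cc p A x.1 * cc p B z.1) := by
    intro x
    have h0 : (if x.1 < t+1 then cc p A x.1 else 0) * (if x.2 < t+1 then cc p (B+1) x.2 else 0)
        = chi t x.1 * chi t x.2 * (cc p A x.1 * cc p (B+1) x.2) := by
      unfold chi; split_ifs <;> ring
    rw [h0, cc_succ, Finset.mul_sum, Finset.mul_sum]
    exact Finset.sum_congr rfl fun z _ => by ring
  simp only [step1]
  rw [Finset.sum_sigma']
  refine Finset.sum_nbij' (fun z => (z.2.2, z.1.1, z.2.1))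
    (fun y => ⟨(y.2.1, y.1 + y.2.2), (y.2.2, y.1)⟩) ?_ ?_ ?_ ?_ ?_
  · rintro ⟨⟨k, l⟩, ⟨x, i⟩⟩ ha
    simp only [Finset.mem_sigma, Finset.HasAntidiagonal.mem_antidiagonal] at ha
    simp only [mem_S3]
    omega
  · rintro ⟨i, k, l⟩ hb
    simp only [mem_S3] at hb
    simp only [Finset.mem_sigma, Finset.HasAntidiagonal.mem_antidiagonal]
    omega
  · rintro ⟨⟨k, l⟩, ⟨x, i⟩⟩ ha
    simp only [Finset.mem_sigma, Finset.HasAntidiagonal.mem_antidiagonal] at ha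
    have hl : l = i + x := by omega
    subst hl
    rfl
  · rintro ⟨i, k, l⟩ _
    rfl
  · rintro ⟨⟨k, l⟩, ⟨x, i⟩⟩ ha
    simp only [Finset.mem_sigma, Finset.HasAntidiagonal.mem_antidiagonal] at ha
    simp only [fR, wgt]
    have : l = i + x := by omega
    subst this
    rfl

private lemma chi_diff (t i k l : ℕ) (h : l ≤ k) :
    0 ≤ chi t k * chi t (i + l) - chi t (i + k) * chi t l := by
  unfold chi
  split_ifs <;> first | (exfalso; omega) | norm_num


/-- **Truncated domination.** If `p ∈ TN₂` then for all `A > B ≥ 0` and all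
`t ∈ ℕ`, `(p^{A+1}(x)|_t)(p^B(x)|_t) ⊑ (p^A(x)|_t)(p^{B+1}(x)|_t)`
coefficient-wise. -/
theorem trunc_power_domination (p : ℕ → ℝ) (hTN : IsTN 2 (toeplitz p))
    (A B : ℕ) (hBA : B < A) (t j : ℕ) :
    ((PowerSeries.mk p ^ (A + 1)).trunc (t + 1) *
        (PowerSeries.mk p ^ B).trunc (t + 1)).coeff j ≤
      ((PowerSeries.mk p ^ A).trunc (t + 1) *
        (PowerSeries.mk p ^ (B + 1)).trunc (t + 1)).coeff j := by
  have hp := p_nonneg p hTN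
  have hpair : ∀ l k : ℕ, l ≤ k → cc p B k * cc p A l ≤ cc p B l * cc p A k := by
    intro l k h
    have h2 := cc_pair p hTN hp B (A - B) l k h
    rwa [show B + (A - B) = A by omega] at h2
  rw [Polynomial.coeff_mul, Polynomial.coeff_mul]
  simp only [PowerSeries.coeff_trunc]
  have hccdef : ∀ (m k : ℕ), (PowerSeries.coeff k) (PowerSeries.mk p ^ m) = cc p m k :=
    fun _ _ => rfl
  simp only [hccdef]
  rw [convertL p A B t j, convertR p A B t j]
  have hswap : ∑ y ∈ S3 j, (fR p t A B (y.1, y.2.2, y.2.1) - fL p t A B (y.1, y.2.2, y.2.1))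
      = ∑ y ∈ S3 j, (fR p t A B y - fL p t A B y) := by
    refine Finset.sum_nbij' (fun y : ℕ × ℕ × ℕ => (y.1, y.2.2, y.2.1))
      (fun y : ℕ × ℕ × ℕ => (y.1, y.2.2, y.2.1)) ?_ ?_ ?_ ?_ ?_
    · rintro ⟨i, k, l⟩ ha
      simp only [mem_S3] at *
      omega
    · rintro ⟨i, k, l⟩ ha
      simp only [mem_S3] at *
      omega
    · rintro ⟨i, k, l⟩ _; rfl
    · rintro ⟨i, k, l⟩ _; rfl
    · rintro ⟨i, k, l⟩ _; rfl
  have key : ∀ y : ℕ × ℕ × ℕ, 0 ≤ (fR p t A B y - fL p t A B y) +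
      (fR p t A B (y.1, y.2.2, y.2.1) - fL p t A B (y.1, y.2.2, y.2.1)) := by
    rintro ⟨i, k, l⟩
    simp only [fR, fL, wgt]
    rcases le_total l k with h | h
    · have e1 := chi_diff t i k l h
      have e2 : 0 ≤ p i * (cc p A k * cc p B l - cc p A l * cc p B k) :=
        mul_nonneg (hp i) (by have := hpair l k h; linarith)
      nlinarith [mul_nonneg e1 e2]
    · have e1 := chi_diff t i l k h
      have e2 : 0 ≤ p i * (cc p A l * cc p B k - cc p A k * cc p B l) :=
        mul_nonneg (hp i) (by have := hpair k l h; linarith)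
      nlinarith [mul_nonneg e1 e2]
  have h2 : 0 ≤ ∑ y ∈ S3 j, ((fR p t A B y - fL p t A B y) +
      (fR p t A B (y.1, y.2.2, y.2.1) - fL p t A B (y.1, y.2.2, y.2.1))) :=
    Finset.sum_nonneg fun y _ => key y
  rw [Finset.sum_add_distrib, hswap, Finset.sum_sub_distrib] at h2
  linarith
end
end

section
/- Let r be a positive integer and let p(x) = Σ_{n=0}^r p_n x^n be a polynomial with p_n > 0 for all 0 ≤ n ≤ r. Let λ be a partition and let t be an integer with 1 ≤ t ≤ λ(1). Then the degree of the polynomial ∏_i (p(x)^{λ(i)}|_{rt}) equals r · Σ_{k=1}^t λ'(k), where λ' is the dual (conjugate) partition of λ. -/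
open Finset

noncomputable section

/-- The dual (conjugate) partition: `λ'(i) = |{j ≥ 1 : λ(j) ≥ i}|`. -/
def PartitionSeq.dual (lam : PartitionSeq) (i : ℕ) : ℕ :=
  Set.ncard {j : ℕ | 1 ≤ j ∧ i ≤ lam.part j}

private lemma coeff_mk_pow_nonneg (p : ℕ → ℝ) (hnn : ∀ n, 0 ≤ p n) :
    ∀ m j, 0 ≤ PowerSeries.coeff j (PowerSeries.mk p ^ m) := by
  intro m
  induction m with
  | zero =>
    intro j
    rw [pow_zero, PowerSeries.coeff_one]
    split_ifs <;> norm_num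
  | succ m ih =>
    intro j
    rw [pow_succ, PowerSeries.coeff_mul]
    refine Finset.sum_nonneg fun x hx => mul_nonneg (ih x.1) ?_
    simpa using hnn x.2

private lemma coeff_mk_pow_eq_zero (r : ℕ) (p : ℕ → ℝ) (hzero : ∀ n, r < n → p n = 0) :
    ∀ m j, r * m < j → PowerSeries.coeff j (PowerSeries.mk p ^ m) = 0 := by
  intro m
  induction m with
  | zero =>
    intro j hj
    rw [pow_zero, PowerSeries.coeff_one, if_neg (by omega)]
  | succ m ih =>
    intro j hj
    rw [pow_succ, PowerSeries.coeff_mul]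
    refine Finset.sum_eq_zero fun x hx => ?_
    have hxj : x.1 + x.2 = j := Finset.HasAntidiagonal.mem_antidiagonal.mp hx
    rcases le_or_gt x.1 (r * m) with h1 | h1
    · have : r < x.2 := by
        have : r * (m + 1) = r * m + r := by ring
        omega
      rw [PowerSeries.coeff_mk, hzero x.2 this, mul_zero]
    · rw [ih x.1 h1, zero_mul]

private lemma coeff_mk_pow_pos (r : ℕ) (p : ℕ → ℝ)
    (hpos : ∀ n ≤ r, 0 < p n) (hnn : ∀ n, 0 ≤ p n) :
    ∀ m j, j ≤ r * m → 0 < PowerSeries.coeff j (PowerSeries.mk p ^ m) := by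
  intro m
  induction m with
  | zero =>
    intro j hj
    have : j = 0 := by omega
    subst this
    rw [pow_zero, PowerSeries.coeff_one, if_pos rfl]
    norm_num
  | succ m ih =>
    intro j hj
    rw [pow_succ, PowerSeries.coeff_mul]
    refine Finset.sum_pos' (fun x hx => mul_nonneg (coeff_mk_pow_nonneg p hnn m x.1)
      (by simpa using hnn x.2)) ?_
    refine ⟨(min j (r * m), j - min j (r * m)), Finset.HasAntidiagonal.mem_antidiagonal.mpr (by omega), ?_⟩
    have hrm : r * (m + 1) = r * m + r := by ring
    refine mul_pos (ih _ (min_le_right _ _)) ?_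
    rw [PowerSeries.coeff_mk]
    exact hpos _ (by omega)

private lemma natDegree_trunc_pow (r t : ℕ) (p : ℕ → ℝ)
    (hpos : ∀ n ≤ r, 0 < p n) (hzero : ∀ n, r < n → p n = 0) (m : ℕ) :
    ((PowerSeries.mk p ^ m).trunc (r * t + 1)).natDegree = r * min m t := by
  have hnn : ∀ n, 0 ≤ p n := fun n => by
    rcases le_or_gt n r with h | h
    · exact (hpos n h).le
    · rw [hzero n h]
  apply le_antisymm
  · rw [Polynomial.natDegree_le_iff_coeff_eq_zero]
    intro k hk
    rw [PowerSeries.coeff_trunc]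
    split_ifs with h
    · rcases le_total m t with hmt | htm
      · exact coeff_mk_pow_eq_zero r p hzero m k (by rwa [min_eq_left hmt] at hk)
      · rw [min_eq_right htm] at hk; omega
    · rfl
  · apply Polynomial.le_natDegree_of_ne_zero
    have h1 : r * min m t ≤ r * t := Nat.mul_le_mul_left r (min_le_right _ _)
    have h2 : r * min m t ≤ r * m := Nat.mul_le_mul_left r (min_le_left _ _)
    rw [PowerSeries.coeff_trunc, if_pos (by omega)]
    exact ne_of_gt (coeff_mk_pow_pos r p hpos hnn m _ h2)

private lemma sum_min_eq (lam : PartitionSeq) (t : ℕ) :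
    ∑ i ∈ lam.finSupp.toFinset, min (lam.part i) t
      = ∑ k ∈ Finset.Icc 1 t, lam.dual k := by
  have key : ∀ k, 1 ≤ k →
      lam.dual k = (lam.finSupp.toFinset.filter (fun i => k ≤ lam.part i)).card := by
    intro k hk
    rw [PartitionSeq.dual, ← Set.ncard_coe_finset]
    congr 1
    ext i
    simp only [Finset.coe_filter, Set.mem_setOf_eq, Set.Finite.mem_toFinset,
      Function.mem_support]
    constructor
    · rintro ⟨h1, h2⟩
      refine ⟨fun h0 => ?_, h2⟩
      · rw [h0] at h2; omega
    · rintro ⟨h1, h2⟩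
      refine ⟨?_, h2⟩
      by_contra h0
      push_neg at h0
      interval_cases i
      rw [lam.zero] at h2; omega
  calc ∑ i ∈ lam.finSupp.toFinset, min (lam.part i) t
      = ∑ i ∈ lam.finSupp.toFinset,
          ((Finset.Icc 1 t).filter (fun k => k ≤ lam.part i)).card := by
        refine Finset.sum_congr rfl fun i _ => ?_
        have : (Finset.Icc 1 t).filter (fun k => k ≤ lam.part i)
            = Finset.Icc 1 (min (lam.part i) t) := by
          ext k; simp only [Finset.mem_filter, Finset.mem_Icc]; omega
        rw [this, Nat.card_Icc]; omega
    _ = ∑ i ∈ lam.finSupp.toFinset, ∑ k ∈ Finset.Icc 1 t,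
          if k ≤ lam.part i then 1 else 0 :=
        Finset.sum_congr rfl fun i _ => Finset.card_filter _ _
    _ = ∑ k ∈ Finset.Icc 1 t, ∑ i ∈ lam.finSupp.toFinset,
          if k ≤ lam.part i then 1 else 0 := Finset.sum_comm
    _ = ∑ k ∈ Finset.Icc 1 t,
          (lam.finSupp.toFinset.filter (fun i => k ≤ lam.part i)).card :=
        Finset.sum_congr rfl fun k _ => (Finset.card_filter _ _).symm
    _ = ∑ k ∈ Finset.Icc 1 t, lam.dual k := by
        refine Finset.sum_congr rfl fun k hk => (key k (Finset.mem_Icc.mp hk).1).symm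

/-- **Degree computation.** If `p(x) = Σ_{n=0}^r p_n x^n` with all `p_n > 0`
for `0 ≤ n ≤ r`, `λ` is a partition and `1 ≤ t ≤ λ(1)`, then
`deg ∏_i (p(x)^{λ(i)} |_{rt}) = r Σ_{k=1}^t λ'(k)`. -/
theorem degree_trunc_prod (r : ℕ) (hr : 1 ≤ r) (p : ℕ → ℝ)
    (hpos : ∀ n ≤ r, 0 < p n) (hzero : ∀ n, r < n → p n = 0)
    (lam : PartitionSeq) (t : ℕ) (ht1 : 1 ≤ t) (ht2 : t ≤ lam.part 1) :
    (∏ᶠ i : ℕ, (PowerSeries.mk p ^ lam.part i).trunc (r * t + 1)).natDegree =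
      r * ∑ k ∈ Finset.Icc 1 t, lam.dual k := by
  have hnn : ∀ n, 0 ≤ p n := fun n => by
    rcases le_or_gt n r with h | h
    · exact (hpos n h).le
    · rw [hzero n h]
  have hsupp : Function.mulSupport
      (fun i => (PowerSeries.mk p ^ lam.part i).trunc (r * t + 1))
        ⊆ ↑lam.finSupp.toFinset := by
    intro i hi
    simp only [Set.Finite.coe_toFinset, Function.mem_support]
    intro h0
    apply hi
    show (PowerSeries.mk p ^ lam.part i).trunc (r * t + 1) = 1
    rw [h0, pow_zero, PowerSeries.trunc_one]
  have hne : ∀ i, ((PowerSeries.mk p ^ lam.part i).trunc (r * t + 1)) ≠ 0 := by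
    intro i h
    have hp0 := coeff_mk_pow_pos r p hpos hnn (lam.part i) 0 (Nat.zero_le _)
    have h0 : ((PowerSeries.mk p ^ lam.part i).trunc (r * t + 1)).coeff 0 = 0 := by
      rw [h]; simp
    rw [PowerSeries.coeff_trunc, if_pos (by omega)] at h0
    linarith
  rw [finprod_eq_finset_prod_of_mulSupport_subset _ hsupp,
    Polynomial.natDegree_prod _ _ (fun i _ => hne i)]
  calc ∑ i ∈ lam.finSupp.toFinset,
        ((PowerSeries.mk p ^ lam.part i).trunc (r * t + 1)).natDegree
      = ∑ i ∈ lam.finSupp.toFinset, r * min (lam.part i) t :=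
        Finset.sum_congr rfl fun i _ => natDegree_trunc_pow r t p hpos hzero _
    _ = r * ∑ i ∈ lam.finSupp.toFinset, min (lam.part i) t := by rw [Finset.mul_sum]
    _ = r * ∑ k ∈ Finset.Icc 1 t, lam.dual k := by rw [sum_min_eq]
end
end

section
/- Let Y be the random variable distributed uniformly on {0,1,3}, i.e. P(Y=k) = 1/3 for k ∈ {0,1,3} and 0 otherwise. Then the partition (4,2) dominates the partition (3,3), yet P(E((4,2),Y,12,6)) = 10/729 > 9/729 = P(E((3,3),Y,12,6)); in particular, condition C((4,2),(3,3),Y) fails. -/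
open Finset

noncomputable section

/-- The partition `(4,2)`. -/
def part42 : PartitionSeq where
  part := fun i => if i = 1 then 4 else if i = 2 then 2 else 0
  zero := rfl
  antitone := by intro i j hi hij; (try dsimp only); split_ifs <;> omega
  finSupp := by
    apply Set.Finite.subset (Set.finite_Iic 2)
    intro x hx
    simp only [Function.mem_support] at hx
    by_contra hc
    simp only [Set.mem_Iic, not_le] at hc
    apply hx
    have h1 : x ≠ 1 := by omega
    have h2 : x ≠ 2 := by omega
    simp [h1, h2]

/-- The partition `(3,3)`. -/
def part33 : PartitionSeq where
  part := fun i => if i = 1 then 3 else if i = 2 then 3 else 0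
  zero := rfl
  antitone := by intro i j hi hij; (try dsimp only); split_ifs <;> omega
  finSupp := by
    apply Set.Finite.subset (Set.finite_Iic 2)
    intro x hx
    simp only [Function.mem_support] at hx
    by_contra hc
    simp only [Set.mem_Iic, not_le] at hc
    apply hx
    have h1 : x ≠ 1 := by omega
    have h2 : x ≠ 2 := by omega
    simp [h1, h2]

/-- The pmf of `Y`, uniform on `{0,1,3}`. -/
def pmfY : ℕ → ℝ := fun k => if k = 0 ∨ k = 1 ∨ k = 3 then 1 / 3 else 0


section AuxCounterexample

lemma aux_c2_calc (n : ℕ) : PowerSeries.coeff n (PowerSeries.mk pmfY ^ 2) =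
    ∑ i ∈ Finset.range (n+1), pmfY i * pmfY (n - i) := by
  rw [sq, PowerSeries.coeff_mul, Finset.Nat.sum_antidiagonal_eq_sum_range_succ_mk]
  simp

lemma aux_c2_0 : PowerSeries.coeff 0 (PowerSeries.mk pmfY ^ 2) = 1/9 := by
  rw [aux_c2_calc]; norm_num [Finset.sum_range_succ, pmfY]
lemma aux_c2_1 : PowerSeries.coeff 1 (PowerSeries.mk pmfY ^ 2) = 2/9 := by
  rw [aux_c2_calc]; norm_num [Finset.sum_range_succ, pmfY]
lemma aux_c2_2 : PowerSeries.coeff 2 (PowerSeries.mk pmfY ^ 2) = 1/9 := by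
  rw [aux_c2_calc]; norm_num [Finset.sum_range_succ, pmfY]
lemma aux_c2_3 : PowerSeries.coeff 3 (PowerSeries.mk pmfY ^ 2) = 2/9 := by
  rw [aux_c2_calc]; norm_num [Finset.sum_range_succ, pmfY]
lemma aux_c2_4 : PowerSeries.coeff 4 (PowerSeries.mk pmfY ^ 2) = 2/9 := by
  rw [aux_c2_calc]; norm_num [Finset.sum_range_succ, pmfY]
lemma aux_c2_5 : PowerSeries.coeff 5 (PowerSeries.mk pmfY ^ 2) = 0 := by
  rw [aux_c2_calc]; norm_num [Finset.sum_range_succ, pmfY]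
lemma aux_c2_6 : PowerSeries.coeff 6 (PowerSeries.mk pmfY ^ 2) = 1/9 := by
  rw [aux_c2_calc]; norm_num [Finset.sum_range_succ, pmfY]

lemma aux_c4_6 : PowerSeries.coeff 6 (PowerSeries.mk pmfY ^ 4) = 10/81 := by
  have h : (PowerSeries.mk pmfY) ^ 4
      = (PowerSeries.mk pmfY ^ 2) * (PowerSeries.mk pmfY ^ 2) := by ring
  rw [h, PowerSeries.coeff_mul, Finset.Nat.sum_antidiagonal_eq_sum_range_succ_mk]
  simp only [Finset.sum_range_succ, Finset.sum_range_zero]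
  norm_num [aux_c2_0, aux_c2_1, aux_c2_2, aux_c2_3, aux_c2_4, aux_c2_5, aux_c2_6]

lemma aux_c3_6 : PowerSeries.coeff 6 (PowerSeries.mk pmfY ^ 3) = 1/9 := by
  have h : (PowerSeries.mk pmfY) ^ 3
      = (PowerSeries.mk pmfY ^ 2) * (PowerSeries.mk pmfY) := by ring
  rw [h, PowerSeries.coeff_mul, Finset.Nat.sum_antidiagonal_eq_sum_range_succ_mk]
  simp only [Finset.sum_range_succ, Finset.sum_range_zero, PowerSeries.coeff_mk]
  norm_num [aux_c2_0, aux_c2_1, aux_c2_2, aux_c2_3, aux_c2_4, aux_c2_5, aux_c2_6, pmfY]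

lemma aux_part42_eq (i : ℕ) (h1 : i ≠ 1) (h2 : i ≠ 2) : part42.part i = 0 := by
  simp [part42, h1, h2]

lemma aux_part33_eq (i : ℕ) (h1 : i ≠ 1) (h2 : i ≠ 2) : part33.part i = 0 := by
  simp [part33, h1, h2]

lemma aux_fPoly42 (p : ℕ → ℝ) :
    fPoly part42 p 6 = PowerSeries.trunc 7 (PowerSeries.mk p ^ 4) *
      PowerSeries.trunc 7 (PowerSeries.mk p ^ 2) := by
  rw [fPoly, finprod_eq_prod_of_mulSupport_subset _
    (s := ({1, 2} : Finset ℕ)) ?_]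
  · rw [show ({1,2} : Finset ℕ) = insert 1 {2} from rfl,
      Finset.prod_insert (by norm_num), Finset.prod_singleton]
    norm_num [part42]
  · intro i hi
    simp only [Function.mem_mulSupport] at hi
    by_contra hmem
    simp only [Finset.coe_insert, Finset.coe_singleton, Set.mem_insert_iff,
      Set.mem_singleton_iff, not_or] at hmem
    apply hi
    rw [aux_part42_eq i hmem.1 hmem.2, pow_zero]
    exact PowerSeries.trunc_one 6

lemma aux_fPoly33 (p : ℕ → ℝ) :
    fPoly part33 p 6 = PowerSeries.trunc 7 (PowerSeries.mk p ^ 3) *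
      PowerSeries.trunc 7 (PowerSeries.mk p ^ 3) := by
  rw [fPoly, finprod_eq_prod_of_mulSupport_subset _
    (s := ({1, 2} : Finset ℕ)) ?_]
  · rw [show ({1,2} : Finset ℕ) = insert 1 {2} from rfl,
      Finset.prod_insert (by norm_num), Finset.prod_singleton]
    norm_num [part33]
  · intro i hi
    simp only [Function.mem_mulSupport] at hi
    by_contra hmem
    simp only [Finset.coe_insert, Finset.coe_singleton, Set.mem_insert_iff,
      Set.mem_singleton_iff, not_or] at hmem
    apply hi
    rw [aux_part33_eq i hmem.1 hmem.2, pow_zero]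
    exact PowerSeries.trunc_one 6

lemma aux_weight (lam : PartitionSeq) (hz : ∀ i, i ≠ 1 → i ≠ 2 → lam.part i = 0) :
    lam.weight = lam.part 1 + lam.part 2 := by
  rw [PartitionSeq.weight, finsum_eq_sum_of_support_subset _
    (s := ({1, 2} : Finset ℕ)) ?_]
  · rw [show ({1,2} : Finset ℕ) = insert 1 {2} from rfl,
      Finset.sum_insert (by norm_num), Finset.sum_singleton]
  · intro i hi
    simp only [Function.mem_support] at hi
    by_contra hmem
    simp only [Finset.coe_insert, Finset.coe_singleton, Set.mem_insert_iff,
      Set.mem_singleton_iff, not_or] at hmem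
    exact hi (hz i hmem.1 hmem.2)

lemma aux_sum_Icc (f : ℕ → ℕ) (hz : ∀ i, i ≠ 1 → i ≠ 2 → f i = 0)
    (j : ℕ) (hj : 2 ≤ j) : ∑ i ∈ Finset.Icc 1 j, f i = f 1 + f 2 := by
  induction j with
  | zero => omega
  | succ n ih =>
    rcases Nat.lt_or_ge n 2 with h | h
    · have hn : n = 1 := by omega
      subst hn
      rw [Finset.sum_Icc_succ_top (by omega), Finset.Icc_self, Finset.sum_singleton]
    · rw [Finset.sum_Icc_succ_top (by omega), ih h,
        hz (n+1) (by omega) (by omega), add_zero]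

lemma aux_probE42 : probE pmfY part42 12 6 = 10 / 729 := by
  rw [probE, aux_fPoly42, Polynomial.coeff_mul,
    Finset.Nat.sum_antidiagonal_eq_sum_range_succ_mk]
  simp only [Finset.sum_range_succ, Finset.sum_range_zero, PowerSeries.coeff_trunc]
  norm_num [aux_c4_6, aux_c2_6]

lemma aux_probE33 : probE pmfY part33 12 6 = 9 / 729 := by
  rw [probE, aux_fPoly33, Polynomial.coeff_mul,
    Finset.Nat.sum_antidiagonal_eq_sum_range_succ_mk]
  simp only [Finset.sum_range_succ, Finset.sum_range_zero, PowerSeries.coeff_trunc]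
  norm_num [aux_c3_6]

end AuxCounterexample

/-- **Counterexample.** For `Y` uniform on `{0,1,3}`: `(4,2) ⊵ (3,3)`, yet
`P(E((4,2),Y,12,6)) = 10/729 > 9/729 = P(E((3,3),Y,12,6))`; in particular
`C((4,2),(3,3),Y)` fails. -/
theorem counterexample_uniform_013 :
    part42.Dominates part33 ∧
    probE pmfY part42 12 6 = 10 / 729 ∧
    probE pmfY part33 12 6 = 9 / 729 ∧
    (9 : ℝ) / 729 < 10 / 729 ∧
    ¬ CondC pmfY part42 part33 := by
  have h42 := aux_probE42
  have h33 := aux_probE33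
  refine ⟨⟨?_, ?_⟩, h42, h33, by norm_num, ?_⟩
  · rw [aux_weight part42 aux_part42_eq, aux_weight part33 aux_part33_eq]
    norm_num [part42, part33]
  · intro j hj
    rcases Nat.lt_or_ge j 2 with h | h
    · have hj1 : j = 1 := by omega
      subst hj1
      simp only [Finset.Icc_self, Finset.sum_singleton]
      norm_num [part42, part33]
    · rw [aux_sum_Icc _ aux_part42_eq j h, aux_sum_Icc _ aux_part33_eq j h]
      norm_num [part42, part33]
  · intro hC
    have := hC 12 6
    rw [h42, h33] at this
    linarith
end
end
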